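/- Let G be a finite group with γ_∞(G) ≤ F(G) (the nilpotent residual containedin the Fitting subgroup). Let P be a Sylow p-subgroup of γ_∞(G) and H a Hall p'-subgroup of G. Then P = [P, H]. -/

import Mathlib

set_option maxHeartbeats 1000000


/-- The nilpotent residual: the last term of the lower central series. -/
def nilRes (G : Type*) [Group G] : Subgroup G := ⨅ n, (⊤ : Subgroup G).lowerCentralSeries n

/-- The Fitting subgroup: the join of all nilpotent normal subgroups. -/
def fitting (G : Type*) [Group G] : Subgroup G :=
  ⨆ H ∈ {H : Subgroup G | H.Normal ∧ Group.IsNilpotent H}, H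

namespace Stmt16Aux

open Subgroup
open scoped Pointwise
open scoped commutatorElement

variable {G : Type*} [Group G]

/-- conjugation by `g` preserves `⁅P,H⁆` as soon as it preserves the generators. -/
lemma conj_commutator_mem {P H : Subgroup G} (g : G)
    (hgen : ∀ x ∈ P, ∀ h ∈ H, g * ⁅x, h⁆ * g⁻¹ ∈ ⁅P, H⁆) :
    ∀ k ∈ ⁅P, H⁆, g * k * g⁻¹ ∈ ⁅P, H⁆ := by
  intro k hk
  rw [Subgroup.commutator_def] at hk
  induction hk using closure_induction with
  | mem x hx =>
      obtain ⟨x₁, hx₁, x₂, hx₂, rfl⟩ := hx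
      exact hgen x₁ hx₁ x₂ hx₂
  | one => simpa using one_mem _
  | mul x y hx hy ihx ihy =>
      have : g * (x * y) * g⁻¹ = (g * x * g⁻¹) * (g * y * g⁻¹) := by group
      rw [this]; exact mul_mem ihx ihy
  | inv x hx ihx =>
      have : g * x⁻¹ * g⁻¹ = (g * x * g⁻¹)⁻¹ := by group
      rw [this]; exact inv_mem ihx

/-- `P` normalizes `⁅P,H⁆`. -/
lemma P_normalizes_commutator {P H : Subgroup G} (u : G) (hu : u ∈ P) :
    ∀ k ∈ ⁅P, H⁆, u * k * u⁻¹ ∈ ⁅P, H⁆ := by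
  apply conj_commutator_mem
  intro x hx h hh
  have key : u * ⁅x, h⁆ * u⁻¹ = ⁅u * x, h⁆ * ⁅u, h⁆⁻¹ := by
    simp only [commutatorElement_def]; group
  rw [key]
  exact mul_mem (commutator_mem_commutator (mul_mem hu hx) hh)
    (inv_mem (commutator_mem_commutator hu hh))

/-- `H` normalizes `⁅P,H⁆`. -/
lemma H_normalizes_commutator {P H : Subgroup G} (u : G) (hu : u ∈ H) :
    ∀ k ∈ ⁅P, H⁆, u * k * u⁻¹ ∈ ⁅P, H⁆ := by
  apply conj_commutator_mem
  intro x hx h hh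
  have key : u * ⁅x, h⁆ * u⁻¹ = ⁅x, u⁆⁻¹ * ⁅x, u * h⁆ := by
    simp only [commutatorElement_def]; group
  rw [key]
  exact mul_mem (inv_mem (commutator_mem_commutator hx hu))
    (commutator_mem_commutator hx (mul_mem hu hh))

/-- In a `p`-group ambient, a subgroup equal to its commutator with the ambient is trivial. -/
lemma eq_bot_of_eq_commutator {p : ℕ} [Fact p.Prime] [Finite G] {S X : Subgroup G}
    (hS : IsPGroup p S) (hXS : X ≤ S) (hX : X = ⁅X, S⁆) : X = ⊥ := by
  haveI : Group.IsNilpotent S := hS.isNilpotent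
  obtain ⟨n, hn⟩ := Subgroup.nilpotent_iff_lowerCentralSeries.mp this
  have key : ∀ m, X ≤ Subgroup.map S.subtype ((⊤ : Subgroup ↥S).lowerCentralSeries m) := by
    intro m
    induction m with
    | zero =>
        rw [Subgroup.lowerCentralSeries_zero, ← MonoidHom.range_eq_map, Subgroup.range_subtype]
        exact hXS
    | succ m ih =>
        rw [hX]
        calc ⁅X, S⁆ ≤ ⁅Subgroup.map S.subtype ((⊤ : Subgroup ↥S).lowerCentralSeries m),
              Subgroup.map S.subtype ((⊤ : Subgroup ↥S))⁆ := by
              apply commutator_mono ih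
              rw [← MonoidHom.range_eq_map, Subgroup.range_subtype]
          _ = Subgroup.map S.subtype ⁅(⊤ : Subgroup ↥S).lowerCentralSeries m, (⊤ : Subgroup ↥S)⁆ := by
              rw [Subgroup.map_commutator]
          _ = Subgroup.map S.subtype ((⊤ : Subgroup ↥S).lowerCentralSeries (m+1)) := rfl
  have := key n
  rw [hn, Subgroup.map_bot] at this
  exact le_bot_iff.mp this

/-- In a nilpotent group, a normal subgroup joining the commutator subgroup to the top is
everything. -/
lemma eq_top_of_sup_commutator {Γ : Type*} [Group Γ] (hnil : Group.IsNilpotent Γ)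
    (K : Subgroup Γ) [K.Normal] (h : K ⊔ (⊤ : Subgroup Γ).lowerCentralSeries 1 = ⊤) : K = ⊤ := by
  have key : ∀ n, K ⊔ (⊤ : Subgroup Γ).lowerCentralSeries n = ⊤ := by
    intro n
    induction n with
    | zero => simp [Subgroup.lowerCentralSeries_zero]
    | succ n ih =>
        have hle : (⊤ : Subgroup Γ).lowerCentralSeries 1 ≤ K ⊔ (⊤ : Subgroup Γ).lowerCentralSeries (n+1) := by
          show ⁅(⊤ : Subgroup Γ), ⊤⁆ ≤ _
          rw [commutator_le]
          intro a ha b hb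
          have ha' : a ∈ (↑(K ⊔ (⊤ : Subgroup Γ).lowerCentralSeries n) : Set Γ) := by rw [ih]; trivial
          rw [Subgroup.mul_normal] at ha'
          obtain ⟨k, hk, c, hc, rfl⟩ := ha'
          have hid : ⁅k * c, b⁆ = k * ⁅c, b⁆ * k⁻¹ * ⁅k, b⁆ := by
            simp only [commutatorElement_def]; group
          rw [hid]
          have heq : (⊤ : Subgroup Γ).lowerCentralSeries (n+1) = ⁅(⊤ : Subgroup Γ).lowerCentralSeries n, ⊤⁆ := rfl
          have h1 : ⁅c, b⁆ ∈ K ⊔ (⊤ : Subgroup Γ).lowerCentralSeries (n+1) := by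
            apply SetLike.le_def.mp le_sup_right
            rw [heq]
            exact commutator_mem_commutator hc (mem_top b)
          haveI hKn : (K ⊔ (⊤ : Subgroup Γ).lowerCentralSeries (n+1)).Normal :=
            sup_normal K ((⊤ : Subgroup Γ).lowerCentralSeries (n+1))
          have h2 : k * ⁅c, b⁆ * k⁻¹ ∈ K ⊔ (⊤ : Subgroup Γ).lowerCentralSeries (n+1) := hKn.conj_mem _ h1 k
          have h3 : ⁅k, b⁆ ∈ K := by
            have hkb : ⁅k, b⁆ = k * (b * k⁻¹ * b⁻¹) := by group
            rw [hkb]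
            exact mul_mem hk (‹K.Normal›.conj_mem _ (inv_mem hk) b)
          exact mul_mem h2 (SetLike.le_def.mp le_sup_left h3)
        rw [eq_top_iff]
        calc (⊤ : Subgroup Γ) = K ⊔ (⊤ : Subgroup Γ).lowerCentralSeries 1 := h.symm
          _ ≤ K ⊔ (K ⊔ (⊤ : Subgroup Γ).lowerCentralSeries (n+1)) := sup_le_sup_left hle K
          _ = K ⊔ (⊤ : Subgroup Γ).lowerCentralSeries (n+1) := by rw [← sup_assoc, sup_idem]
  obtain ⟨n, hn⟩ := Subgroup.nilpotent_iff_lowerCentralSeries.mp hnil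
  have := key n
  rwa [hn, sup_bot_eq] at this

instance nilRes_normal : (nilRes G).Normal := by
  constructor
  intro x hx g
  simp only [nilRes, Subgroup.mem_iInf] at hx ⊢
  exact fun n => (Subgroup.lowerCentralSeries_normal ⊤ n).conj_mem _ (hx n) g

lemma exists_nilRes_eq (G : Type*) [Group G] [Finite G] :
    ∃ n, (⊤ : Subgroup G).lowerCentralSeries n = nilRes G ∧
      (⊤ : Subgroup G).lowerCentralSeries (n+1) = (⊤ : Subgroup G).lowerCentralSeries n := by
  set f : ℕ → ℕ := fun k => Nat.card ((⊤ : Subgroup G).lowerCentralSeries k) with hf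
  have hne : (Set.range f).Nonempty := ⟨f 0, ⟨0, rfl⟩⟩
  obtain ⟨n, hn⟩ : ∃ n, f n = sInf (Set.range f) := Nat.sInf_mem hne
  have hmin : ∀ m, f n ≤ f m := fun m => hn ▸ Nat.sInf_le ⟨m, rfl⟩
  have hstep : ∀ m, n ≤ m → (⊤ : Subgroup G).lowerCentralSeries m = (⊤ : Subgroup G).lowerCentralSeries n := by
    intro m hm
    induction m with
    | zero => cases Nat.le_zero.mp hm; rfl
    | succ m ih =>
        rcases Nat.lt_or_ge n (m+1) with h | h
        · have hm' : n ≤ m := Nat.lt_succ_iff.mp h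
          have hle : (⊤ : Subgroup G).lowerCentralSeries (m+1) ≤ (⊤ : Subgroup G).lowerCentralSeries n := by
            rw [← ih hm']
            exact Subgroup.lowerCentralSeries_antitone _ (Nat.le_succ m)
          exact Subgroup.eq_of_le_of_card_ge hle (hmin (m+1))
        · rw [le_antisymm hm h]
  refine ⟨n, ?_, hstep (n+1) (Nat.le_succ n)⟩
  refine le_antisymm (le_iInf ?_) (iInf_le _ n)
  intro m
  rcases le_total n m with h | h
  · rw [hstep m h]
  · exact Subgroup.lowerCentralSeries_antitone _ h

lemma commutator_nilRes_top (G : Type*) [Group G] [Finite G] :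
    ⁅nilRes G, (⊤ : Subgroup G)⁆ = nilRes G := by
  obtain ⟨n, h1, h2⟩ := exists_nilRes_eq G
  have h3 : (⊤ : Subgroup G).lowerCentralSeries (n+1) = ⁅(⊤ : Subgroup G).lowerCentralSeries n, ⊤⁆ := rfl
  rw [← h1, ← h3, h2]

lemma map_lcs_eq {G' : Type*} [Group G'] (f : G →* G') (hf : Function.Surjective f) (m : ℕ) :
    Subgroup.map f ((⊤ : Subgroup G).lowerCentralSeries m) = (⊤ : Subgroup G').lowerCentralSeries m := by
  induction m with
  | zero =>
      rw [Subgroup.lowerCentralSeries_zero, Subgroup.lowerCentralSeries_zero]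
      exact Subgroup.map_top_of_surjective _ hf
  | succ m ih =>
      have e1 : (⊤ : Subgroup G).lowerCentralSeries (m+1) = ⁅(⊤ : Subgroup G).lowerCentralSeries m, ⊤⁆ := rfl
      have e2 : (⊤ : Subgroup G').lowerCentralSeries (m+1) = ⁅(⊤ : Subgroup G').lowerCentralSeries m, ⊤⁆ := rfl
      rw [e1, e2, Subgroup.map_commutator, ih, Subgroup.map_top_of_surjective _ hf]

lemma nilRes_quotient_nilpotent (G : Type*) [Group G] [Finite G] :
    Group.IsNilpotent (G ⧸ nilRes G) := by
  obtain ⟨n, h1, -⟩ := exists_nilRes_eq G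
  rw [Subgroup.nilpotent_iff_lowerCentralSeries]
  refine ⟨n, ?_⟩
  rw [← map_lcs_eq (QuotientGroup.mk' (nilRes G)) (QuotientGroup.mk'_surjective _) n, h1,
    Subgroup.map_eq_bot_iff, QuotientGroup.ker_mk']

lemma card_map_dvd {G' : Type*} [Group G'] [Finite G] (f : G →* G') (K : Subgroup G) :
    Nat.card (K.map f) ∣ Nat.card K := by
  have hrange : (f.comp K.subtype).range = K.map f := by
    ext x
    simp [MonoidHom.mem_range, Subgroup.mem_map, Subtype.exists]
  rw [← hrange]
  exact Subgroup.card_dvd_of_surjective _ (f.comp K.subtype).rangeRestrict_surjective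

lemma card_sup_dvd_mul [Finite G] (B C : Subgroup G) [C.Normal] :
    Nat.card ↥(B ⊔ C) ∣ Nat.card B * Nat.card C := by
  have h1 : Nat.card (C.subgroupOf (B ⊔ C)) * (C.subgroupOf (B ⊔ C)).index
      = Nat.card ↥(B ⊔ C) := Subgroup.card_mul_index _
  have h2 : Nat.card (C.subgroupOf (B ⊔ C)) = Nat.card C :=
    Nat.card_congr (Subgroup.subgroupOfEquivOfLe le_sup_right).toEquiv
  have h3 : (C.subgroupOf (B ⊔ C)).index = Nat.card (↥B ⧸ C.subgroupOf B) := by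
    rw [Subgroup.index_eq_card]
    exact (Nat.card_congr (QuotientGroup.quotientInfEquivProdNormalQuotient B C).toEquiv).symm
  have h4 : Nat.card (↥B ⧸ C.subgroupOf B) ∣ Nat.card B :=
    Subgroup.card_quotient_dvd_card _
  rw [← h1, h2, h3, mul_comm (Nat.card B) (Nat.card C)]
  exact Nat.mul_dvd_mul_left _ h4


lemma sylow_normal_of_nilpotent {Γ : Type*} [Group Γ] [Finite Γ] [Group.IsNilpotent Γ]
    (q : ℕ) (hq : Fact q.Prime) (R : Sylow q Γ) : (R : Subgroup Γ).Normal := by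
  have h := (isNilpotent_of_finite_tfae (G := Γ)).out 0 3
  exact h.mp ‹Group.IsNilpotent Γ› q hq R

lemma nilpotent_decomp (Γ : Type*) [Group Γ] [Finite Γ] (p : ℕ) [hpf : Fact p.Prime]
    [hnil : Group.IsNilpotent Γ] :
    ∃ T D : Subgroup Γ, T.Normal ∧ D.Normal ∧ IsPGroup p T ∧ ¬ p ∣ Nat.card D ∧
      (∃ k, D.index = p ^ k) ∧ T ⊔ D = ⊤ ∧
      (∀ x : Γ, (∃ n, x ^ p ^ n = 1) → x ∈ T) ∧ (∀ x : Γ, ¬ p ∣ orderOf x → x ∈ D) := by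
  obtain ⟨Tsyl⟩ : Nonempty (Sylow p Γ) := inferInstance
  set T := (Tsyl : Subgroup Γ) with hT
  have hTnormal : T.Normal := sylow_normal_of_nilpotent p hpf Tsyl
  have hTp : IsPGroup p T := Tsyl.isPGroup'
  have hTidx : ¬ p ∣ T.index := Tsyl.not_dvd_index
  -- maximal normal p'-subgroup
  set Qset : Set (Subgroup Γ) := {B | B.Normal ∧ ¬ p ∣ Nat.card B} with hQset
  have hbot : (⊥ : Subgroup Γ) ∈ Qset := by
    refine ⟨inferInstance, ?_⟩
    rw [Subgroup.card_bot]
    exact fun h => (hpf.out.one_lt.ne' (Nat.dvd_one.mp h))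
  obtain ⟨D, hD, hDmax⟩ := Set.Finite.exists_maximalFor id Qset (Set.toFinite _) ⟨⊥, hbot⟩
  haveI hDnormal : D.Normal := hD.1
  have hDp' : ¬ p ∣ Nat.card D := hD.2
  -- all prime divisors of card (Γ ⧸ D) are p
  have hq : ∀ q : ℕ, q.Prime → q ∣ Nat.card (Γ ⧸ D) → q = p := by
    intro q hq hdvd
    by_contra hqp
    haveI hqf := Fact.mk hq
    obtain ⟨R⟩ : Nonempty (Sylow q (Γ ⧸ D)) := inferInstance
    have hRnormal : (R : Subgroup (Γ ⧸ D)).Normal := sylow_normal_of_nilpotent q hqf R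
    have hRcard : Nat.card R = q ^ (Nat.card (Γ ⧸ D)).factorization q := R.card_eq_multiplicity
    have hfpos : (Nat.card (Γ ⧸ D)).factorization q ≠ 0 := by
      have := hq.factorization_pos_of_dvd Nat.card_pos.ne' hdvd
      omega
    set D' := Subgroup.comap (QuotientGroup.mk' D) (R : Subgroup (Γ ⧸ D)) with hD'
    have hD'p' : ∀ x ∈ D', ¬ p ∣ orderOf x := by
      intro x hx hpx
      obtain ⟨j, hj⟩ := R.isPGroup' ⟨QuotientGroup.mk' D x, hx⟩
      have hj' : (QuotientGroup.mk' D) (x ^ q ^ j) = 1 := by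
        rw [map_pow]
        exact congrArg Subtype.val hj
      have hxD : x ^ q ^ j ∈ D := (QuotientGroup.eq_one_iff _).mp hj'
      have h2 : (x ^ q ^ j) ^ Nat.card D = 1 :=
        orderOf_dvd_iff_pow_eq_one.mp (Subgroup.orderOf_dvd_natCard D hxD)
      have hord : orderOf x ∣ q ^ j * Nat.card D :=
        orderOf_dvd_of_pow_eq_one (by rw [pow_mul]; exact h2)
      have hpd := hpx.trans hord
      rcases (Nat.Prime.dvd_mul hpf.out).mp hpd with h | h
      · exact hqp ((Nat.prime_dvd_prime_iff_eq hpf.out hq).mp (hpf.out.dvd_of_dvd_pow h)).symm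
      · exact hDp' h
    have hcard : ¬ p ∣ Nat.card D' := by
      intro hpd
      have : Nonempty (Fintype ↥D') := ⟨Fintype.ofFinite _⟩
      obtain ⟨ft⟩ := this
      obtain ⟨g, hg⟩ := @exists_prime_orderOf_dvd_card ↥D' _ ft p hpf
        (by rwa [← Nat.card_eq_fintype_card])
      have : orderOf (g : Γ) = p := by
        rw [← hg]
        exact (orderOf_injective D'.subtype Subtype.coe_injective g)
      exact hD'p' (g : Γ) g.2 (this ▸ dvd_refl p)
    have hD'Q : D' ∈ Qset := ⟨hRnormal.comap _, hcard⟩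
    have hDD' : D ≤ D' := by
      intro x hx
      show QuotientGroup.mk' D x ∈ (R : Subgroup (Γ ⧸ D))
      have : QuotientGroup.mk' D x = 1 := (QuotientGroup.eq_one_iff _).mpr hx
      rw [this]; exact one_mem _
    have hEq : D = D' := le_antisymm hDD' (hDmax hD'Q hDD')
    have hR : (R : Subgroup (Γ ⧸ D)) = ⊥ := by
      rw [← Subgroup.map_comap_eq_self_of_surjective (QuotientGroup.mk'_surjective D)
        (R : Subgroup (Γ ⧸ D))]
      show Subgroup.map _ D' = ⊥
      rw [← hEq, Subgroup.map_eq_bot_iff, QuotientGroup.ker_mk']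
    rw [hR] at hRcard
    rw [Subgroup.card_bot] at hRcard
    exact hfpos (by
      by_contra h
      have h1 : 1 < q ^ (Nat.card (Γ ⧸ D)).factorization q :=
        Nat.one_lt_pow h hq.one_lt
      omega)
  -- card (Γ ⧸ D) is a power of p
  have hm0 : Nat.card (Γ ⧸ D) ≠ 0 := Nat.card_pos.ne'
  have hmpow : ∃ k, D.index = p ^ k := by
    refine ⟨(Nat.card (Γ ⧸ D)).primeFactorsList.length, ?_⟩
    rw [Subgroup.index_eq_card]
    exact Nat.eq_prime_pow_of_unique_prime_dvd hm0 (fun hd hdvd => hq _ hd hdvd)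
  obtain ⟨k, hk⟩ := hmpow
  -- characterization of T
  have hTchar : ∀ x : Γ, (∃ n, x ^ p ^ n = 1) → x ∈ T := by
    intro x ⟨n, hn⟩
    have h1 : (QuotientGroup.mk' T) x ^ p ^ n = 1 := by rw [← map_pow, hn, map_one]
    have h2 : orderOf ((QuotientGroup.mk' T) x) ∣ p ^ n := orderOf_dvd_of_pow_eq_one h1
    have h3 : orderOf ((QuotientGroup.mk' T) x) ∣ T.index := by
      rw [Subgroup.index_eq_card]; exact orderOf_dvd_natCard _
    have hcop : Nat.Coprime (p ^ n) T.index :=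
      Nat.Coprime.pow_left n ((Nat.Prime.coprime_iff_not_dvd hpf.out).mpr hTidx)
    have : orderOf ((QuotientGroup.mk' T) x) = 1 :=
      Nat.dvd_one.mp (hcop ▸ Nat.dvd_gcd h2 h3)
    rw [orderOf_eq_one_iff] at this
    exact (QuotientGroup.eq_one_iff _).mp this
  -- characterization of D
  have hDchar : ∀ x : Γ, ¬ p ∣ orderOf x → x ∈ D := by
    intro x hpx
    have h2 : orderOf ((QuotientGroup.mk' D) x) ∣ orderOf x := orderOf_map_dvd _ _
    have h3 : orderOf ((QuotientGroup.mk' D) x) ∣ p ^ k := by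
      rw [← hk, Subgroup.index_eq_card]; exact orderOf_dvd_natCard _
    obtain ⟨j, hjk, hj⟩ := (Nat.dvd_prime_pow hpf.out).mp h3
    have hj0 : j = 0 := by
      by_contra h
      exact hpx (dvd_trans (hj ▸ dvd_pow_self p h) h2)
    have : orderOf ((QuotientGroup.mk' D) x) = 1 := by rw [hj, hj0, pow_zero]
    rw [orderOf_eq_one_iff] at this
    exact (QuotientGroup.eq_one_iff _).mp this
  -- T ⊔ D = ⊤
  obtain ⟨v, hv⟩ := (IsPGroup.iff_card).mp hTp
  have hTD : T ⊔ D = ⊤ := by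
    have e1 : Nat.card T * T.index = Nat.card Γ := Subgroup.card_mul_index T
    have e2 : Nat.card D * D.index = Nat.card Γ := Subgroup.card_mul_index D
    have e3 : p ^ v * T.index = Nat.card D * p ^ k := by rw [← hv, ← hk, e1, e2]
    have hcopTD : Nat.Coprime (p ^ v) (Nat.card D) :=
      Nat.Coprime.pow_left v ((Nat.Prime.coprime_iff_not_dvd hpf.out).mpr hDp')
    have hcopTI : Nat.Coprime (p ^ k) T.index :=
      Nat.Coprime.pow_left k ((Nat.Prime.coprime_iff_not_dvd hpf.out).mpr hTidx)
    have d1 : p ^ v ∣ p ^ k := hcopTD.dvd_of_dvd_mul_left ⟨T.index, e3.symm⟩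
    have d2 : p ^ k ∣ p ^ v := by
      apply hcopTI.dvd_of_dvd_mul_left
      have hstep : p ^ k ∣ Nat.card ↥D * p ^ k := Dvd.intro_left _ rfl
      rw [← e3] at hstep
      rwa [mul_comm] at hstep
    have hvk : p ^ v = p ^ k := Nat.dvd_antisymm d1 d2
    have hTI : T.index = Nat.card D := by
      have := e3
      rw [hvk] at this
      rw [mul_comm] at this
      exact Nat.eq_of_mul_eq_mul_right (Nat.pos_of_ne_zero (pow_ne_zero k hpf.out.ne_zero)) this
    have hprod : Nat.card T * Nat.card D = Nat.card Γ := by rw [← hTI, e1]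
    have dT : Nat.card T ∣ Nat.card ↥(T ⊔ D) := Subgroup.card_dvd_of_le le_sup_left
    have dD : Nat.card D ∣ Nat.card ↥(T ⊔ D) := Subgroup.card_dvd_of_le le_sup_right
    have hcop' : Nat.Coprime (Nat.card T) (Nat.card D) := hv ▸ hcopTD
    have hdvd1 : Nat.card Γ ∣ Nat.card ↥(T ⊔ D) := by
      rw [← hprod]; exact hcop'.mul_dvd_of_dvd_of_dvd dT dD
    have hdvd2 : Nat.card ↥(T ⊔ D) ∣ Nat.card Γ := Subgroup.card_subgroup_dvd_card _
    exact Subgroup.eq_top_of_card_eq _ (Nat.dvd_antisymm hdvd2 hdvd1)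
  exact ⟨T, D, hTnormal, hDnormal, hTp, hDp', ⟨k, hk⟩, hTD, hTchar, hDchar⟩

lemma normal_of_p'_card_index_pow {Γ : Type*} [Group Γ] [Finite Γ] {p : ℕ} [hpf : Fact p.Prime]
    [Group.IsNilpotent Γ] {W : Subgroup Γ} (hW : ¬ p ∣ Nat.card W) {b : ℕ}
    (hidx : W.index = p ^ b) : W.Normal := by
  obtain ⟨T, D, hTn, hDn, hTp, hDp', ⟨k, hDidx⟩, hTD, hTchar, hDchar⟩ := nilpotent_decomp Γ p
  have hWD : W ≤ D := by
    intro x hx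
    apply hDchar
    intro hpx
    exact hW (hpx.trans (Subgroup.orderOf_dvd_natCard W hx))
  obtain ⟨t, ht⟩ : Nat.card W ∣ Nat.card D := Subgroup.card_dvd_of_le hWD
  have e1 : Nat.card W * p ^ b = Nat.card Γ := by rw [← hidx]; exact Subgroup.card_mul_index W
  have e2 : Nat.card D * p ^ k = Nat.card Γ := by rw [← hDidx]; exact Subgroup.card_mul_index D
  have hW0 : Nat.card W ≠ 0 := Nat.card_pos.ne'
  have e3 : p ^ b = t * p ^ k := by
    have : Nat.card W * p ^ b = Nat.card W * (t * p ^ k) := by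
      rw [e1, ← e2, ht, mul_assoc]
    exact Nat.eq_of_mul_eq_mul_left (Nat.pos_of_ne_zero hW0) this
  have ht1 : t = 1 := by
    have htd : t ∣ p ^ b := ⟨p ^ k, e3⟩
    obtain ⟨j, hjb, hj⟩ := (Nat.dvd_prime_pow hpf.out).mp htd
    rcases Nat.eq_zero_or_pos j with h0 | hpos
    · rw [hj, h0, pow_zero]
    · exfalso
      apply hDp'
      rw [ht, hj]
      exact Dvd.dvd.mul_left (dvd_pow_self p hpos.ne') _
  have hcardeq : Nat.card D ≤ Nat.card W := by rw [ht, ht1, mul_one]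
  have : W = D := Subgroup.eq_of_le_of_card_ge hWD hcardeq
  rw [this]; exact hDn

lemma main_abelian {G : Type*} [Group G] [Finite G] {p : ℕ} [hpf : Fact p.Prime]
    (P Q H : Subgroup G) [hPn : P.Normal] [hQn : Q.Normal]
    (hPp : IsPGroup p P) (hPab : ∀ x ∈ P, ∀ y ∈ P, x * y = y * x)
    (hPG : ⁅P, (⊤ : Subgroup G)⁆ = P)
    (hQC : ∀ x ∈ Q, ∀ y ∈ P, x * y = y * x)
    (hM : ((P ⊔ Q) ⊔ H).Normal)
    (hHp' : ¬ p ∣ Nat.card H) (a : ℕ) (hHidx : H.index = p ^ a) :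
    ⁅P, H⁆ = P := by
  have hKP : ⁅P, H⁆ ≤ P := Subgroup.commutator_le_left _ _
  haveI hKnormal : (⁅P, H⁆).Normal := by
    constructor
    intro k hk g
    refine conj_commutator_mem g ?_ k hk
    intro x hx h hh
    have hx' : g * x * g⁻¹ ∈ P := hPn.conj_mem x hx g
    have hw : g * h * g⁻¹ ∈ ((P ⊔ Q) ⊔ H) :=
      hM.conj_mem h (SetLike.le_def.mp le_sup_right hh) g
    have hw' : g * h * g⁻¹ ∈ (((P ⊔ Q : Subgroup G) : Set G) * (H : Set G)) := by
      rw [← Subgroup.normal_mul]; exact hw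
    obtain ⟨n, hn, h', hh', heq⟩ := hw'
    have hn' : n ∈ ((P : Set G) * (Q : Set G)) := by rw [← Subgroup.normal_mul]; exact hn
    obtain ⟨u, hu, v, hv, heq2⟩ := hn'
    have hconj : g * ⁅x, h⁆ * g⁻¹ = ⁅g * x * g⁻¹, g * h * g⁻¹⁆ :=
      conjugate_commutatorElement x h g
    have hw2 : g * h * g⁻¹ = u * v * h' := by rw [← heq, ← heq2]
    have hxc : (g * x * g⁻¹) * (u * v) = (u * v) * (g * x * g⁻¹) := by
      calc (g * x * g⁻¹) * (u * v) = ((g * x * g⁻¹) * u) * v := (mul_assoc _ _ _).symm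
        _ = (u * (g * x * g⁻¹)) * v := by rw [hPab u hu _ hx']
        _ = u * ((g * x * g⁻¹) * v) := mul_assoc _ _ _
        _ = u * (v * (g * x * g⁻¹)) := by rw [hQC v hv _ hx']
        _ = (u * v) * (g * x * g⁻¹) := (mul_assoc _ _ _).symm
    have hkey : ⁅g * x * g⁻¹, u * v * h'⁆ = (u * v) * ⁅g * x * g⁻¹, h'⁆ * (u * v)⁻¹ := by
      rw [commutatorElement_def, commutatorElement_def]
      calc (g*x*g⁻¹) * (u*v*h') * (g*x*g⁻¹)⁻¹ * (u*v*h')⁻¹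
          = ((g*x*g⁻¹) * (u*v)) * (h' * (g*x*g⁻¹)⁻¹ * (u*v*h')⁻¹) := by group
        _ = ((u*v) * (g*x*g⁻¹)) * (h' * (g*x*g⁻¹)⁻¹ * (u*v*h')⁻¹) := by rw [hxc]
        _ = u * v * ((g*x*g⁻¹) * h' * (g*x*g⁻¹)⁻¹ * h'⁻¹) * (u*v)⁻¹ := by group
    have hk0 : ⁅g * x * g⁻¹, h'⁆ ∈ ⁅P, H⁆ := commutator_mem_commutator hx' hh'
    have hvk : v * ⁅g * x * g⁻¹, h'⁆ * v⁻¹ = ⁅g * x * g⁻¹, h'⁆ := by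
      rw [hQC v hv _ (hKP hk0)]; group
    have huk : u * ⁅g * x * g⁻¹, h'⁆ * u⁻¹ ∈ ⁅P, H⁆ :=
      P_normalizes_commutator u hu _ hk0
    have hassemble : (u * v) * ⁅g * x * g⁻¹, h'⁆ * (u * v)⁻¹
        = u * (v * ⁅g * x * g⁻¹, h'⁆ * v⁻¹) * u⁻¹ := by group
    rw [hconj, hw2, hkey, hassemble, hvk]
    exact huk
  -- Now pass to the quotient G ⧸ ⁅P,H⁆
  set π := QuotientGroup.mk' ⁅P, H⁆ with hπdef
  have hπ : Function.Surjective π := QuotientGroup.mk'_surjective _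
  have hP'n : (Subgroup.map π P).Normal := hPn.map π hπ
  have hP'p : IsPGroup p (Subgroup.map π P) := hPp.map π
  have hP'G : ⁅Subgroup.map π P, (⊤ : Subgroup (G ⧸ ⁅P, H⁆))⁆ = Subgroup.map π P := by
    rw [← Subgroup.map_top_of_surjective π hπ, ← Subgroup.map_commutator, hPG]
  have hXn : (Subgroup.centralizer ((Subgroup.map π P : Subgroup (G ⧸ ⁅P, H⁆)) : Set (G ⧸ ⁅P, H⁆))).Normal := by
    constructor
    intro c hc g
    rw [Subgroup.mem_centralizer_iff] at hc ⊢
    intro y hy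
    have hy' : g⁻¹ * y * g ∈ Subgroup.map π P := by
      have := hP'n.conj_mem y hy g⁻¹
      simpa using this
    have hcy := hc _ hy'
    calc y * (g * c * g⁻¹) = g * ((g⁻¹ * y * g) * c) * g⁻¹ := by group
      _ = g * (c * (g⁻¹ * y * g)) * g⁻¹ := by rw [hcy]
      _ = (g * c * g⁻¹) * y := by group
  haveI := hXn
  have hHX : Subgroup.map π H ≤ Subgroup.centralizer (Subgroup.map π P : Set (G ⧸ ⁅P, H⁆)) := by
    apply Subgroup.commutator_eq_bot_iff_le_centralizer.mp
    rw [← Subgroup.map_commutator, Subgroup.map_eq_bot_iff, QuotientGroup.ker_mk']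
    exact le_of_eq (Subgroup.commutator_comm H P)
  have hXidx : ∃ b, (Subgroup.centralizer (Subgroup.map π P : Set (G ⧸ ⁅P, H⁆))).index ∣ p ^ a ∧
      (Subgroup.centralizer (Subgroup.map π P : Set (G ⧸ ⁅P, H⁆))).index = p ^ b := by
    have h1 : (Subgroup.centralizer (Subgroup.map π P : Set (G ⧸ ⁅P, H⁆))).index ∣
        (Subgroup.map π H).index := Subgroup.index_dvd_of_le hHX
    have h2' : ((Subgroup.map π H).comap π).index = (Subgroup.map π H).index :=
      Subgroup.index_comap_of_surjective _ hπ
    rw [Subgroup.comap_map_eq, QuotientGroup.ker_mk'] at h2'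
    have h3 : (H ⊔ ⁅P, H⁆).index ∣ H.index := Subgroup.index_dvd_of_le le_sup_left
    have hdvd : (Subgroup.centralizer (Subgroup.map π P : Set (G ⧸ ⁅P, H⁆))).index ∣ p ^ a := by
      rw [← hHidx]
      exact h1.trans (h2'.symm ▸ h3)
    obtain ⟨b, _, hb⟩ := (Nat.dvd_prime_pow hpf.out).mp hdvd
    exact ⟨b, hdvd, hb⟩
  obtain ⟨b, -, hXb⟩ := hXidx
  obtain ⟨S⟩ : Nonempty (Sylow p (G ⧸ ⁅P, H⁆)) := inferInstance
  have hXS : Subgroup.centralizer (Subgroup.map π P : Set (G ⧸ ⁅P, H⁆)) ⊔ (S : Subgroup (G ⧸ ⁅P, H⁆)) = ⊤ := by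
    have h1 : (Subgroup.centralizer (Subgroup.map π P : Set (G ⧸ ⁅P, H⁆)) ⊔ (S : Subgroup (G ⧸ ⁅P, H⁆))).index ∣ p ^ b :=
      hXb ▸ Subgroup.index_dvd_of_le le_sup_left
    have h2 : (Subgroup.centralizer (Subgroup.map π P : Set (G ⧸ ⁅P, H⁆)) ⊔ (S : Subgroup (G ⧸ ⁅P, H⁆))).index ∣
        (S : Subgroup (G ⧸ ⁅P, H⁆)).index := Subgroup.index_dvd_of_le le_sup_right
    obtain ⟨j, hjb, hj⟩ := (Nat.dvd_prime_pow hpf.out).mp h1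
    rcases Nat.eq_zero_or_pos j with h0 | hpos
    · rw [← Subgroup.index_eq_one, hj, h0, pow_zero]
    · exfalso
      apply S.not_dvd_index
      refine dvd_trans ?_ h2
      rw [hj]
      exact dvd_pow_self p hpos.ne'
  have hPS : Subgroup.map π P ≤ (S : Subgroup (G ⧸ ⁅P, H⁆)) := by
    have hsup : IsPGroup p ↥((S : Subgroup (G ⧸ ⁅P, H⁆)) ⊔ Subgroup.map π P) :=
      S.isPGroup'.to_sup_of_normal_right hP'p
    have hmax := S.is_maximal' hsup le_sup_left
    rw [← hmax]
    exact le_sup_right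
  have hPcomm : Subgroup.map π P = ⁅Subgroup.map π P, (S : Subgroup (G ⧸ ⁅P, H⁆))⁆ := by
    refine le_antisymm ?_ (Subgroup.commutator_le_left _ _)
    conv_lhs => rw [← hP'G]
    rw [Subgroup.commutator_le]
    intro y hy g _
    have hg' : g ∈ (↑(Subgroup.centralizer (Subgroup.map π P : Set (G ⧸ ⁅P, H⁆)) ⊔ (S : Subgroup (G ⧸ ⁅P, H⁆))) : Set (G ⧸ ⁅P, H⁆)) := by
      rw [hXS]; trivial
    rw [Subgroup.normal_mul] at hg'
    obtain ⟨x, hx, s, hs, rfl⟩ := hg'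
    have hxy : y * x = x * y := (Subgroup.mem_centralizer_iff.mp hx) y hy
    have hys : ⁅y, s⁆ ∈ Subgroup.map π P := by
      have h1 : ⁅y, s⁆ = y * (s * y⁻¹ * s⁻¹) := by group
      rw [h1]
      exact mul_mem hy (hP'n.conj_mem _ (inv_mem hy) s)
    have hxys : ⁅y, s⁆ * x = x * ⁅y, s⁆ := (Subgroup.mem_centralizer_iff.mp hx) _ hys
    have hkey : ⁅y, x * s⁆ = ⁅y, s⁆ := by
      rw [commutatorElement_def]
      calc y * (x * s) * y⁻¹ * (x * s)⁻¹
          = (y * x) * (s * y⁻¹ * s⁻¹ * x⁻¹) := by group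
        _ = (x * y) * (s * y⁻¹ * s⁻¹ * x⁻¹) := by rw [hxy]
        _ = x * (y * s * y⁻¹ * s⁻¹) * x⁻¹ := by group
        _ = x * ⁅y, s⁆ * x⁻¹ := by rw [commutatorElement_def]
        _ = ⁅y, s⁆ * x * x⁻¹ := by rw [← hxys]
        _ = ⁅y, s⁆ := by group
    rw [hkey]
    exact commutator_mem_commutator hy hs
  have hP'bot : Subgroup.map π P = ⊥ :=
    eq_bot_of_eq_commutator S.isPGroup' hPS hPcomm
  have hPle : P ≤ ⁅P, H⁆ := by
    intro x hx
    have hmem : π x ∈ Subgroup.map π P := Subgroup.mem_map_of_mem π hx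
    rw [hP'bot, Subgroup.mem_bot] at hmem
    have : x ∈ MonoidHom.ker π := hmem
    rwa [hπdef, QuotientGroup.ker_mk'] at this
  exact le_antisymm hKP hPle

lemma main_general {G : Type*} [Group G] [Finite G] {p : ℕ} [hpf : Fact p.Prime]
    (P Q H : Subgroup G) [hPn : P.Normal] [hQn : Q.Normal]
    (hPp : IsPGroup p P)
    (hPG : ⁅P, (⊤ : Subgroup G)⁆ = P)
    (hQC : ∀ x ∈ Q, ∀ y ∈ P, x * y = y * x)
    (hM : ((P ⊔ Q) ⊔ H).Normal)
    (hHp' : ¬ p ∣ Nat.card H) (a : ℕ) (hHidx : H.index = p ^ a) :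
    ⁅P, H⁆ = P := by
  haveI hP2n : (⁅P, P⁆).Normal := Subgroup.commutator_normal P P
  set π := QuotientGroup.mk' ⁅P, P⁆ with hπdef
  have hπ : Function.Surjective π := QuotientGroup.mk'_surjective _
  haveI : (Subgroup.map π P).Normal := hPn.map π hπ
  haveI : (Subgroup.map π Q).Normal := hQn.map π hπ
  have hPab : ∀ x ∈ Subgroup.map π P, ∀ y ∈ Subgroup.map π P, x * y = y * x := by
    rintro x ⟨x₀, hx₀, rfl⟩ y ⟨y₀, hy₀, rfl⟩
    rw [← map_mul, ← map_mul, hπdef, QuotientGroup.mk'_eq_mk']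
    refine ⟨⁅y₀⁻¹, x₀⁻¹⁆, commutator_mem_commutator (inv_mem hy₀) (inv_mem hx₀), ?_⟩
    simp only [commutatorElement_def]
    group
  have hQC' : ∀ x ∈ Subgroup.map π Q, ∀ y ∈ Subgroup.map π P, x * y = y * x := by
    rintro x ⟨q₀, hq₀, rfl⟩ y ⟨p₀, hp₀, rfl⟩
    rw [← map_mul, ← map_mul, hQC q₀ hq₀ p₀ hp₀]
  have hPG' : ⁅Subgroup.map π P, (⊤ : Subgroup (G ⧸ ⁅P, P⁆))⁆ = Subgroup.map π P := by
    rw [← Subgroup.map_top_of_surjective π hπ, ← Subgroup.map_commutator, hPG]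
  haveI hM' : ((Subgroup.map π P ⊔ Subgroup.map π Q) ⊔ Subgroup.map π H).Normal := by
    rw [← Subgroup.map_sup, ← Subgroup.map_sup]
    exact hM.map π hπ
  have hHp'' : ¬ p ∣ Nat.card (Subgroup.map π H) :=
    fun hd => hHp' (hd.trans (card_map_dvd π H))
  have hHidx' : ∃ b, (Subgroup.map π H).index = p ^ b := by
    have h2' : ((Subgroup.map π H).comap π).index = (Subgroup.map π H).index :=
      Subgroup.index_comap_of_surjective _ hπ
    rw [Subgroup.comap_map_eq, QuotientGroup.ker_mk'] at h2'
    have h3 : (H ⊔ ⁅P, P⁆).index ∣ H.index := Subgroup.index_dvd_of_le le_sup_left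
    have : (Subgroup.map π H).index ∣ p ^ a := by
      rw [← hHidx, ← h2']
      exact h3
    obtain ⟨b, _, hb⟩ := (Nat.dvd_prime_pow hpf.out).mp this
    exact ⟨b, hb⟩
  obtain ⟨b, hb⟩ := hHidx'
  have hres := main_abelian (Subgroup.map π P) (Subgroup.map π Q) (Subgroup.map π H)
    (hPp.map π) hPab hPG' hQC' hM' hHp'' b hb
  have hmapeq : Subgroup.map π ⁅P, H⁆ = Subgroup.map π P := by
    rw [Subgroup.map_commutator]; exact hres
  have hcomap := congrArg (Subgroup.comap π) hmapeq
  rw [Subgroup.comap_map_eq, Subgroup.comap_map_eq, QuotientGroup.ker_mk'] at hcomap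
  have hP2P : ⁅P, P⁆ ≤ P := Subgroup.commutator_le_left _ _
  have hKP : ⁅P, H⁆ ≤ P := Subgroup.commutator_le_left _ _
  have hKP2 : ⁅P, H⁆ ⊔ ⁅P, P⁆ = P := by
    rw [hcomap, sup_eq_left.mpr hP2P]
  haveI hKsub : ((⁅P, H⁆).subgroupOf P).Normal := by
    constructor
    intro k hk g
    rw [Subgroup.mem_subgroupOf] at hk ⊢
    have hcc : (g : G) * (k : G) * (g : G)⁻¹ ∈ ⁅P, H⁆ :=
      P_normalizes_commutator (g : G) g.2 (k : G) hk
    simpa using hcc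
  haveI : Group.IsNilpotent ↥P := hPp.isNilpotent
  have hsup : (⁅P, H⁆).subgroupOf P ⊔ (⊤ : Subgroup ↥P).lowerCentralSeries 1 = ⊤ := by
    rw [eq_top_iff]
    intro x _
    have hx : (x : G) ∈ ((⁅P, H⁆ : Subgroup G) : Set G) * ((⁅P, P⁆ : Subgroup G) : Set G) := by
      rw [← Subgroup.mul_normal, hKP2]
      exact x.2
    obtain ⟨k, hk, c, hc, heq⟩ := hx
    have hkP : k ∈ P := hKP hk
    have hcP : c ∈ P := hP2P hc
    have hxeq : x = (⟨k, hkP⟩ : ↥P) * ⟨c, hcP⟩ := by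
      apply Subtype.ext
      exact heq.symm
    rw [hxeq]
    apply mul_mem
    · apply SetLike.le_def.mp le_sup_left
      rw [Subgroup.mem_subgroupOf]; exact hk
    · apply SetLike.le_def.mp le_sup_right
      have hmapc : ⁅P, P⁆ = Subgroup.map P.subtype ⁅(⊤ : Subgroup ↥P), ⊤⁆ := by
        rw [Subgroup.map_commutator, ← MonoidHom.range_eq_map, Subgroup.range_subtype]
      rw [hmapc] at hc
      obtain ⟨y, hy, hyc⟩ := hc
      have hyx : y = ⟨c, hcP⟩ := Subtype.ext hyc
      have e1 : (⊤ : Subgroup ↥P).lowerCentralSeries 1 = ⁅(⊤ : Subgroup ↥P), ⊤⁆ := rfl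
      rw [e1, ← hyx]
      exact hy
  have htop := eq_top_of_sup_commutator inferInstance ((⁅P, H⁆).subgroupOf P) hsup
  have hPK : P ≤ ⁅P, H⁆ := by
    intro x hx
    have hmem : (⟨x, hx⟩ : ↥P) ∈ (⁅P, H⁆).subgroupOf P := htop ▸ Subgroup.mem_top _
    rwa [Subgroup.mem_subgroupOf] at hmem
  exact le_antisymm hKP hPK

end Stmt16Aux

open Subgroup in
open scoped Pointwise in
open scoped commutatorElement in
theorem stmt16 {G : Type} [Group G] [Finite G] {p : ℕ} (hp : p.Prime)
    (hres : nilRes G ≤ fitting G)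
    (P : Subgroup G) (hPle : P ≤ nilRes G) (hPp : IsPGroup p P)
    (hPsyl : ∀ Q : Subgroup G, Q ≤ nilRes G → IsPGroup p Q → P ≤ Q → Q = P)
    (H : Subgroup G) (hHp' : ¬ p ∣ Nat.card H)
    (hHall : Nat.card H * p ^ (Nat.card G).factorization p = Nat.card G) :
    ⁅P, H⁆ = P := by
  haveI hpf : Fact p.Prime := ⟨hp⟩
  have hNtop : ⁅nilRes G, (⊤ : Subgroup G)⁆ = nilRes G := Stmt16Aux.commutator_nilRes_top G
  haveI hNn : (nilRes G).Normal := Stmt16Aux.nilRes_normal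
  -- maximal normal p-subgroup Π
  have hPbot : (⊥ : Subgroup G) ∈ {B : Subgroup G | B.Normal ∧ IsPGroup p B} :=
    ⟨inferInstance, IsPGroup.of_bot⟩
  obtain ⟨Pi, hPi, hPimax⟩ := Set.Finite.exists_maximalFor id
    {B : Subgroup G | B.Normal ∧ IsPGroup p B} (Set.toFinite _) ⟨⊥, hPbot⟩
  haveI hPin : Pi.Normal := hPi.1
  have hPiall : ∀ B : Subgroup G, B.Normal → IsPGroup p B → B ≤ Pi := by
    intro B hBn hBp
    haveI := hBn
    have hBP : B ⊔ Pi ∈ {B : Subgroup G | B.Normal ∧ IsPGroup p B} :=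
      ⟨Subgroup.sup_normal B Pi, hBp.to_sup_of_normal_right hPi.2⟩
    have hmax := le_antisymm le_sup_right (hPimax hBP le_sup_right)
    calc B ≤ B ⊔ Pi := le_sup_left
      _ = Pi := hmax.symm
  -- maximal normal p'-subgroup Θ
  have hQbot : (⊥ : Subgroup G) ∈ {B : Subgroup G | B.Normal ∧ ¬ p ∣ Nat.card B} :=
    ⟨inferInstance, by rw [Subgroup.card_bot]; exact fun h => hp.one_lt.ne' (Nat.dvd_one.mp h)⟩
  obtain ⟨Th, hTh, hThmax⟩ := Set.Finite.exists_maximalFor id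
    {B : Subgroup G | B.Normal ∧ ¬ p ∣ Nat.card B} (Set.toFinite _) ⟨⊥, hQbot⟩
  haveI hThn : Th.Normal := hTh.1
  have hThp' : ¬ p ∣ Nat.card Th := hTh.2
  have hThall : ∀ B : Subgroup G, B.Normal → ¬ p ∣ Nat.card B → B ≤ Th := by
    intro B hBn hBp
    haveI := hBn
    have hBQ : B ⊔ Th ∈ {B : Subgroup G | B.Normal ∧ ¬ p ∣ Nat.card B} := by
      refine ⟨Subgroup.sup_normal B Th, ?_⟩
      intro hd
      rcases (Nat.Prime.dvd_mul hp).mp (hd.trans (Stmt16Aux.card_sup_dvd_mul B Th)) with h | h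
      exacts [hBp h, hTh.2 h]
    have hmax := le_antisymm le_sup_right (hThmax hBQ le_sup_right)
    calc B ≤ B ⊔ Th := le_sup_left
      _ = Th := hmax.symm
  -- Π ⊓ Θ = ⊥ and elementwise commutation
  have hPiThbot : Pi ⊓ Th = ⊥ := by
    apply inf_eq_bot_of_coprime
    obtain ⟨n, hn⟩ := IsPGroup.iff_card.mp hPi.2
    rw [hn]
    exact Nat.Coprime.pow_left n ((Nat.Prime.coprime_iff_not_dvd hp).mpr hThp')
  have hPiTh : ∀ x ∈ Th, ∀ y ∈ Pi, x * y = y * x := by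
    have hcomm : ⁅Pi, Th⁆ = ⊥ :=
      le_bot_iff.mp (hPiThbot ▸ Subgroup.commutator_le_inf Pi Th)
    intro x hx y hy
    have hmem : ⁅y, x⁆ ∈ (⊥ : Subgroup G) := hcomm ▸ commutator_mem_commutator hy hx
    rw [Subgroup.mem_bot, commutatorElement_eq_one_iff_mul_comm] at hmem
    exact hmem.symm
  -- fitting G ≤ Π ⊔ Θ
  have hfit : fitting G ≤ Pi ⊔ Th := by
    rw [fitting]
    refine iSup₂_le ?_
    intro A hA
    haveI hAn : A.Normal := hA.1
    haveI hAnil : Group.IsNilpotent ↥A := hA.2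
    obtain ⟨T, D, hTn, hDn, hTp, hDp', -, hTD, hTchar, hDchar⟩ := Stmt16Aux.nilpotent_decomp ↥A p
    have hTGmem : ∀ x : G, x ∈ Subgroup.map A.subtype T ↔ x ∈ A ∧ (∃ n, x ^ p ^ n = 1) := by
      intro x
      constructor
      · rintro ⟨y, hy, rfl⟩
        refine ⟨y.2, ?_⟩
        obtain ⟨n, hn⟩ := hTp ⟨y, hy⟩
        refine ⟨n, ?_⟩
        have h1 := congrArg (Subtype.val) hn
        have h2 := congrArg (Subtype.val) h1
        simpa using h2
      · rintro ⟨hxA, n, hn⟩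
        refine ⟨⟨x, hxA⟩, ?_, rfl⟩
        apply hTchar
        refine ⟨n, ?_⟩
        apply Subtype.ext
        simpa using hn
    have hDGmem : ∀ x : G, x ∈ Subgroup.map A.subtype D ↔ x ∈ A ∧ ¬ p ∣ orderOf x := by
      intro x
      constructor
      · rintro ⟨y, hy, rfl⟩
        refine ⟨y.2, ?_⟩
        have e2 : orderOf (A.subtype y) = orderOf y :=
          orderOf_injective A.subtype Subtype.coe_injective y
        have e1 : orderOf y = orderOf (⟨y, hy⟩ : ↥D) :=
          orderOf_injective D.subtype Subtype.coe_injective ⟨y, hy⟩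
        rw [e2, e1]
        intro hdvd
        exact hDp' (hdvd.trans (orderOf_dvd_natCard _))
      · rintro ⟨hxA, hord⟩
        refine ⟨⟨x, hxA⟩, ?_, rfl⟩
        have h2 : orderOf x = orderOf (⟨x, hxA⟩ : ↥A) :=
          orderOf_injective A.subtype Subtype.coe_injective ⟨x, hxA⟩
        exact hDchar _ (by rw [← h2]; exact hord)
    have hTGnormal : (Subgroup.map A.subtype T).Normal := by
      constructor
      intro x hx g
      rw [hTGmem] at hx ⊢
      obtain ⟨hxA, n, hn⟩ := hx
      refine ⟨hAn.conj_mem x hxA g, n, ?_⟩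
      have hmap := map_pow (MulAut.conj g).toMonoidHom x (p ^ n)
      simp only [MulEquiv.toMonoidHom_eq_coe, MonoidHom.coe_coe, MulAut.conj_apply] at hmap
      rw [← hmap, hn]
      group
    have hDGnormal : (Subgroup.map A.subtype D).Normal := by
      constructor
      intro x hx g
      rw [hDGmem] at hx ⊢
      obtain ⟨hxA, hord⟩ := hx
      refine ⟨hAn.conj_mem x hxA g, ?_⟩
      have horder : orderOf (g * x * g⁻¹) = orderOf x := by
        have h1 := orderOf_injective (MulAut.conj g).toMonoidHom (MulAut.conj g).injective x
        simpa [MulAut.conj_apply] using h1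
      rwa [horder]
    have hmaptop : Subgroup.map A.subtype ⊤ = A := by
      rw [← MonoidHom.range_eq_map, Subgroup.range_subtype]
    have hAsup : A = Subgroup.map A.subtype T ⊔ Subgroup.map A.subtype D := by
      rw [← Subgroup.map_sup, hTD, hmaptop]
    have hDGcard : ¬ p ∣ Nat.card (Subgroup.map A.subtype D) := by
      have hcong : Nat.card (Subgroup.map A.subtype D) = Nat.card D :=
        (Nat.card_congr (Subgroup.equivMapOfInjective D A.subtype Subtype.coe_injective).toEquiv).symm
      rwa [hcong]
    calc A = Subgroup.map A.subtype T ⊔ Subgroup.map A.subtype D := hAsup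
      _ ≤ Pi ⊔ Th := sup_le_sup (hPiall _ hTGnormal (hTp.map _)) (hThall _ hDGnormal hDGcard)
  have hNle : nilRes G ≤ Pi ⊔ Th := hres.trans hfit
  -- key decomposition of elements of N
  have hkey : ∀ x ∈ nilRes G, ∃ u v : G, u ∈ nilRes G ⊓ Pi ∧ v ∈ nilRes G ⊓ Th ∧ x = u * v := by
    intro x hx
    have hx' : x ∈ ((Pi : Set G) * (Th : Set G)) := by
      rw [← Subgroup.normal_mul]; exact hNle hx
    obtain ⟨u, hu, v, hv, heq⟩ := hx'
    have heq' : x = u * v := heq.symm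
    have hcommute : Commute u v := (hPiTh v hv u hu).symm
    have hvm : v ^ Nat.card Th = 1 :=
      orderOf_dvd_iff_pow_eq_one.mp (Subgroup.orderOf_dvd_natCard Th hv)
    have hxm : x ^ Nat.card Th = u ^ Nat.card Th := by
      rw [heq', hcommute.mul_pow, hvm, mul_one]
    obtain ⟨k, hk⟩ := hPi.2 ⟨u, hu⟩
    have hk' : u ^ p ^ k = 1 := by
      have := congrArg (Subtype.val) hk
      simpa using this
    have hcop : Nat.Coprime (Nat.card Th) (p ^ k) :=
      Nat.Coprime.pow_right k (((Nat.Prime.coprime_iff_not_dvd hp).mpr hThp').symm)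
    have hφpos : 0 < Nat.totient (p ^ k) := Nat.totient_pos.mpr (pow_pos hp.pos k)
    have heuler : Nat.card Th ^ Nat.totient (p ^ k) ≡ 1 [MOD p ^ k] :=
      Nat.ModEq.pow_totient hcop
    have hordu : orderOf u ∣ p ^ k := orderOf_dvd_of_pow_eq_one hk'
    have hmod : Nat.card Th ^ Nat.totient (p ^ k) ≡ 1 [MOD orderOf u] :=
      Nat.ModEq.of_dvd hordu heuler
    have hu_eq : u ^ Nat.card Th ^ Nat.totient (p ^ k) = u ^ 1 :=
      pow_eq_pow_iff_modEq.mpr hmod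
    have ht : Nat.card Th ^ Nat.totient (p ^ k)
        = Nat.card Th * Nat.card Th ^ (Nat.totient (p ^ k) - 1) := by
      conv_lhs => rw [show Nat.totient (p ^ k) = 1 + (Nat.totient (p ^ k) - 1) by omega]
      rw [pow_add, pow_one]
    have hux : x ^ Nat.card Th ^ Nat.totient (p ^ k) = u := by
      calc x ^ Nat.card Th ^ Nat.totient (p ^ k)
          = (x ^ Nat.card Th) ^ Nat.card Th ^ (Nat.totient (p ^ k) - 1) := by
            rw [ht, pow_mul]
        _ = (u ^ Nat.card Th) ^ Nat.card Th ^ (Nat.totient (p ^ k) - 1) := by rw [hxm]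
        _ = u ^ Nat.card Th ^ Nat.totient (p ^ k) := by rw [← pow_mul, ← ht]
        _ = u := by rw [hu_eq, pow_one]
    have huN : u ∈ nilRes G := by
      rw [← hux]; exact pow_mem hx _
    have hvN : v ∈ nilRes G := by
      have : v = u⁻¹ * x := by rw [heq']; group
      rw [this]; exact mul_mem (inv_mem huN) hx
    exact ⟨u, v, ⟨huN, hu⟩, ⟨hvN, hv⟩, heq'⟩
  -- P = N ⊓ Π
  have hPPi : P ≤ Pi := by
    intro x hx
    obtain ⟨u, v, hu, hv, heq⟩ := hkey x (hPle hx)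
    obtain ⟨n, hn⟩ := hPp ⟨x, hx⟩
    have hn' : x ^ p ^ n = 1 := by
      have := congrArg (Subtype.val) hn
      simpa using this
    have hcommute : Commute u v := (hPiTh v hv.2 u hu.2).symm
    have h1 : u ^ p ^ n * v ^ p ^ n = 1 := by
      rw [← hcommute.mul_pow, ← heq, hn']
    have hvpn : v ^ p ^ n = (u ^ p ^ n)⁻¹ := eq_inv_of_mul_eq_one_right h1
    have hvmem : v ^ p ^ n ∈ Pi ⊓ Th := by
      refine Subgroup.mem_inf.mpr ⟨?_, ?_⟩
      · rw [hvpn]; exact inv_mem (pow_mem hu.2 _)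
      · exact pow_mem hv.2 _
    have hv1 : v ^ p ^ n = 1 := by
      rw [hPiThbot] at hvmem
      exact Subgroup.mem_bot.mp hvmem
    have hordv : orderOf v ∣ p ^ n := orderOf_dvd_of_pow_eq_one hv1
    have hordv' : orderOf v ∣ Nat.card Th := Subgroup.orderOf_dvd_natCard Th hv.2
    have hcop : Nat.Coprime (p ^ n) (Nat.card Th) :=
      Nat.Coprime.pow_left n ((Nat.Prime.coprime_iff_not_dvd hp).mpr hThp')
    have hv1' : v = 1 := by
      have : orderOf v = 1 := Nat.dvd_one.mp (hcop ▸ Nat.dvd_gcd hordv hordv')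
      rwa [orderOf_eq_one_iff] at this
    rw [heq, hv1', mul_one]
    exact hu.2
  have hNPi_p : IsPGroup p ↥(nilRes G ⊓ Pi) := hPi.2.to_le inf_le_right
  have hPeq : nilRes G ⊓ Pi = P := hPsyl _ inf_le_left hNPi_p (le_inf hPle hPPi)
  haveI hPnormal : P.Normal := hPeq ▸ Subgroup.normal_inf_normal (nilRes G) Pi
  haveI hQnormal : (nilRes G ⊓ Th).Normal := Subgroup.normal_inf_normal (nilRes G) Th
  have hQp' : ¬ p ∣ Nat.card (nilRes G ⊓ Th : Subgroup G) :=
    fun hd => hThp' (hd.trans (Subgroup.card_dvd_of_le inf_le_right))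
  have hNPQ : nilRes G = P ⊔ (nilRes G ⊓ Th) := by
    apply le_antisymm
    · intro x hx
      obtain ⟨u, v, hu, hv, rfl⟩ := hkey x hx
      exact mul_mem (SetLike.le_def.mp le_sup_left (hPeq ▸ hu))
        (SetLike.le_def.mp le_sup_right hv)
    · exact sup_le hPle inf_le_left
  have hQC : ∀ x ∈ (nilRes G ⊓ Th : Subgroup G), ∀ y ∈ P, x * y = y * x := by
    intro x hx y hy
    have hyPi : y ∈ Pi := (hPeq.symm ▸ hy : y ∈ nilRes G ⊓ Pi).2
    exact hPiTh x hx.2 y hyPi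
  have hPQbot : P ⊓ (nilRes G ⊓ Th) = ⊥ := by
    apply inf_eq_bot_of_coprime
    obtain ⟨n, hn⟩ := IsPGroup.iff_card.mp hPp
    rw [hn]
    exact Nat.Coprime.pow_left n ((Nat.Prime.coprime_iff_not_dvd hp).mpr hQp')
  -- P = ⁅P, ⊤⁆
  have hPG : ⁅P, (⊤ : Subgroup G)⁆ = P := by
    apply le_antisymm (Subgroup.commutator_le_left _ _)
    haveI : (⁅P, (⊤ : Subgroup G)⁆).Normal := Subgroup.commutator_normal _ _
    haveI : (⁅(nilRes G ⊓ Th : Subgroup G), (⊤ : Subgroup G)⁆).Normal :=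
      Subgroup.commutator_normal _ _
    have hsplit : nilRes G ≤ ⁅P, ⊤⁆ ⊔ ⁅(nilRes G ⊓ Th : Subgroup G), ⊤⁆ := by
      conv_lhs => rw [← hNtop]
      rw [Subgroup.commutator_le]
      intro g₁ hg₁ g₂ _
      have hg₁' : g₁ ∈ ((P : Set G) * ((nilRes G ⊓ Th : Subgroup G) : Set G)) := by
        rw [← Subgroup.normal_mul, ← hNPQ]; exact hg₁
      obtain ⟨u, hu, v, hv, rfl⟩ := hg₁'
      have hid : ⁅u * v, g₂⁆ = u * ⁅v, g₂⁆ * u⁻¹ * ⁅u, g₂⁆ := by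
        simp only [commutatorElement_def]; group
      rw [hid]
      have h1 : ⁅v, g₂⁆ ∈ ⁅P, ⊤⁆ ⊔ ⁅(nilRes G ⊓ Th : Subgroup G), ⊤⁆ :=
        SetLike.le_def.mp le_sup_right (commutator_mem_commutator hv (Subgroup.mem_top _))
      have h2 : u * ⁅v, g₂⁆ * u⁻¹ ∈ ⁅P, ⊤⁆ ⊔ ⁅(nilRes G ⊓ Th : Subgroup G), ⊤⁆ :=
        (Subgroup.sup_normal _ _).conj_mem _ h1 u
      exact mul_mem h2
        (SetLike.le_def.mp le_sup_left (commutator_mem_commutator hu (Subgroup.mem_top _)))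
    intro x hx
    have hx' : x ∈ ((⁅P, (⊤ : Subgroup G)⁆ : Subgroup G) : Set G)
        * ((⁅(nilRes G ⊓ Th : Subgroup G), (⊤ : Subgroup G)⁆ : Subgroup G) : Set G) := by
      rw [← Subgroup.mul_normal]
      exact hsplit (hPle hx)
    obtain ⟨c, hc, d, hd, heq⟩ := hx'
    have hcP : c ∈ P := Subgroup.commutator_le_left _ _ hc
    have hdQ : d ∈ (nilRes G ⊓ Th : Subgroup G) := Subgroup.commutator_le_left _ _ hd
    have hdP : d ∈ P := by
      have hde : d = c⁻¹ * x := by rw [← heq]; group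
      rw [hde]; exact mul_mem (inv_mem hcP) hx
    have hd1 : d = 1 := by
      have : d ∈ P ⊓ (nilRes G ⊓ Th) := ⟨hdP, hdQ⟩
      rwa [hPQbot, Subgroup.mem_bot] at this
    have hxcd : x = c * d := by rw [← heq]
    rw [hxcd, hd1, mul_one]
    exact hc
  -- index of H
  have hHidx : H.index = p ^ (Nat.card G).factorization p := by
    have h1 : Nat.card H * H.index = Nat.card G := Subgroup.card_mul_index H
    have h2 : 0 < Nat.card H := Nat.card_pos
    apply Nat.eq_of_mul_eq_mul_left h2
    rw [h1, hHall]
  -- (P ⊔ Q) ⊔ H is normal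
  haveI hGN : Group.IsNilpotent (G ⧸ nilRes G) := Stmt16Aux.nilRes_quotient_nilpotent G
  have hWp' : ¬ p ∣ Nat.card (Subgroup.map (QuotientGroup.mk' (nilRes G)) H) :=
    fun hd => hHp' (hd.trans (Stmt16Aux.card_map_dvd _ H))
  have hWidx : ∃ b, (Subgroup.map (QuotientGroup.mk' (nilRes G)) H).index = p ^ b := by
    have h2' : ((Subgroup.map (QuotientGroup.mk' (nilRes G)) H).comap
        (QuotientGroup.mk' (nilRes G))).index
        = (Subgroup.map (QuotientGroup.mk' (nilRes G)) H).index :=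
      Subgroup.index_comap_of_surjective _ (QuotientGroup.mk'_surjective _)
    rw [Subgroup.comap_map_eq, QuotientGroup.ker_mk'] at h2'
    have h3 : (H ⊔ nilRes G).index ∣ H.index := Subgroup.index_dvd_of_le le_sup_left
    have hdvd : (Subgroup.map (QuotientGroup.mk' (nilRes G)) H).index
        ∣ p ^ (Nat.card G).factorization p := by
      rw [← hHidx, ← h2']; exact h3
    obtain ⟨b, _, hb⟩ := (Nat.dvd_prime_pow hp).mp hdvd
    exact ⟨b, hb⟩
  obtain ⟨bW, hbW⟩ := hWidx
  haveI hWn : (Subgroup.map (QuotientGroup.mk' (nilRes G)) H).Normal :=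
    Stmt16Aux.normal_of_p'_card_index_pow hWp' hbW
  haveI hMn : ((P ⊔ (nilRes G ⊓ Th)) ⊔ H).Normal := by
    have hcomap : Subgroup.comap (QuotientGroup.mk' (nilRes G))
        (Subgroup.map (QuotientGroup.mk' (nilRes G)) H) = H ⊔ nilRes G := by
      rw [Subgroup.comap_map_eq, QuotientGroup.ker_mk']
    have hnorm : (H ⊔ nilRes G).Normal := hcomap ▸ (hWn.comap _)
    have heq : (P ⊔ (nilRes G ⊓ Th)) ⊔ H = H ⊔ nilRes G := by
      rw [← hNPQ, sup_comm]
    rw [heq]; exact hnorm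
  exact Stmt16Aux.main_general P (nilRes G ⊓ Th) H hPp hPG hQC hMn hHp' _ hHidx
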